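/- arXiv:2205.13182 — 2 statements merged into one kernel-verified Lean document; each statement's English description precedes it below -/
import Mathlib

section
/- Let Y ∈ ℝ^{m×n} with singular value decomposition Y = U Σ Vᵀ (U ∈ ℝ^{m×m} and V ∈ ℝ^{n×n} orthogonal, Σ ∈ ℝ^{m×n} diagonal with nonnegative entries), and let γ > 0. Then the matrix L* = U (Σ − (1/(2γ))·I)₊ Vᵀ, where (M₊)_{i,j} = max(M_{i,j}, 0), is a global minimizer over L ∈ ℝ^{m×n} of the Nuclear-Norm Penalization objective h(L) = ‖L‖_* + γ‖Y − L‖_F², i.e. for every L ∈ ℝ^{m×n}, ‖L*‖_* + γ‖Y − L*‖_F² ≤ ‖L‖_* + γ‖Y − L‖_F². -/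
open Matrix

/-- The nuclear norm of a real matrix: the trace of the positive semidefinite
square root of `Aᵀ * A` (equivalently, the sum of the singular values of `A`). -/
noncomputable def nuclearNorm {m n : ℕ} (A : Matrix (Fin m) (Fin n) ℝ) : ℝ :=
  (((Matrix.posSemidef_conjTranspose_mul_self A).1.eigenvectorUnitary : Matrix (Fin n) (Fin n) ℝ) *
    diagonal ((RCLike.ofReal : ℝ → ℝ) ∘ (√·) ∘ (Matrix.posSemidef_conjTranspose_mul_self A).1.eigenvalues) *
    (star (Matrix.posSemidef_conjTranspose_mul_self A).1.eigenvectorUnitary :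
      Matrix (Fin n) (Fin n) ℝ)).trace

/-- The Frobenius norm of a real matrix. -/
noncomputable def frobNorm {m n : ℕ} (A : Matrix (Fin m) (Fin n) ℝ) : ℝ :=
  Real.sqrt (∑ i, ∑ j, (A i j) ^ 2)

namespace NNPaux

variable {m n : ℕ}

open scoped MatrixOrder in
lemma nuclearNorm_eq_trace_sqrt (A : Matrix (Fin m) (Fin n) ℝ) :
    nuclearNorm A = (CFC.sqrt (Aᴴ * A)).trace := by
  rw [CFC.sqrt_eq_real_sqrt _ (Matrix.posSemidef_conjTranspose_mul_self A).nonneg,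
    cfcₙ_eq_cfc (hf0 := by simp),
    (Matrix.posSemidef_conjTranspose_mul_self A).1.cfc_eq]
  rfl

lemma sum_diag_col (j : Fin n) (g : Fin m → ℝ)
    (hg : ∀ i : Fin m, (i:ℕ) ≠ (j:ℕ) → g i = 0) :
    ∑ i, g i = if h : (j:ℕ) < m then g ⟨(j:ℕ), h⟩ else 0 := by
  split_ifs with h
  · exact Finset.sum_eq_single _ (fun i _ hi => hg i (fun hij => hi (Fin.ext hij))) (by simp)
  · exact Finset.sum_eq_zero fun i _ => hg i (by have := i.isLt; omega)

lemma ip_eq_trace (A B : Matrix (Fin m) (Fin n) ℝ) :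
    ∑ i, ∑ j, A i j * B i j = (Aᵀ * B).trace := by
  simp only [trace, diag_apply, mul_apply, transpose_apply]
  exact Finset.sum_comm

lemma sandwich_mul (U : Matrix (Fin m) (Fin m) ℝ) (V : Matrix (Fin n) (Fin n) ℝ)
    (hU : Uᵀ * U = 1) (A B : Matrix (Fin m) (Fin n) ℝ) :
    (U * A * Vᵀ)ᵀ * (U * B * Vᵀ) = V * (Aᵀ * B) * Vᵀ := by
  have h : (U * A * Vᵀ)ᵀ = V * (Aᵀ * Uᵀ) := by
    simp [transpose_mul, Matrix.mul_assoc]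
  rw [h]
  calc V * (Aᵀ * Uᵀ) * (U * B * Vᵀ) = V * (Aᵀ * (Uᵀ * U) * B) * Vᵀ := by
        simp only [Matrix.mul_assoc]
    _ = V * (Aᵀ * B) * Vᵀ := by rw [hU, Matrix.mul_one]

lemma trace_conj (V : Matrix (Fin n) (Fin n) ℝ) (hV : Vᵀ * V = 1)
    (M : Matrix (Fin n) (Fin n) ℝ) : (V * M * Vᵀ).trace = M.trace := by
  rw [trace_mul_cycle, hV, Matrix.one_mul]

lemma ip_sandwich (U : Matrix (Fin m) (Fin m) ℝ) (V : Matrix (Fin n) (Fin n) ℝ)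
    (hU : Uᵀ * U = 1) (hV : Vᵀ * V = 1) (A B : Matrix (Fin m) (Fin n) ℝ) :
    ∑ i, ∑ j, (U * A * Vᵀ) i j * (U * B * Vᵀ) i j = ∑ i, ∑ j, A i j * B i j := by
  rw [ip_eq_trace, ip_eq_trace, sandwich_mul U V hU, trace_conj V hV]

open scoped MatrixOrder in
lemma nuclear_sandwich (U : Matrix (Fin m) (Fin m) ℝ) (V : Matrix (Fin n) (Fin n) ℝ)
    (hU : Uᵀ * U = 1) (hV : Vᵀ * V = 1) (E : Matrix (Fin m) (Fin n) ℝ)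
    (hEdiag : ∀ (i : Fin m) (j : Fin n), (i:ℕ) ≠ (j:ℕ) → E i j = 0)
    (hE0 : ∀ (i : Fin m) (j : Fin n), 0 ≤ E i j) :
    nuclearNorm (U * E * Vᵀ) = ∑ j : Fin n, ∑ i : Fin m, E i j := by
  set d : Fin n → ℝ := fun j => ∑ i, E i j with hd
  have hd0 : 0 ≤ d := fun j => Finset.sum_nonneg fun i _ => hE0 i j
  have hF : Matrix.PosSemidef (Matrix.diagonal d) := Matrix.PosSemidef.diagonal hd0
  set B : Matrix (Fin n) (Fin n) ℝ := V * Matrix.diagonal d * Vᵀ with hB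
  have hBpsd : B.PosSemidef := by
    have := hF.mul_mul_conjTranspose_same V
    rwa [conjTranspose_eq_transpose_of_trivial] at this
  have hEE : Eᵀ * E = Matrix.diagonal (fun j => d j * d j) := by
    ext j k
    by_cases hjk : (j:ℕ) = (k:ℕ)
    · have hjk' : j = k := Fin.ext hjk
      subst hjk'
      rw [mul_apply, diagonal_apply_eq]
      have h2 : d j = if h : (j:ℕ) < m then E ⟨(j:ℕ),h⟩ j else 0 :=
        sum_diag_col j _ (fun i hi => hEdiag i j hi)
      have h1 : ∑ i, Eᵀ j i * E i j
          = if h : (j:ℕ) < m then E ⟨(j:ℕ),h⟩ j * E ⟨(j:ℕ),h⟩ j else 0 := by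
        simp only [transpose_apply]
        exact sum_diag_col j (fun i => E i j * E i j)
          (fun i hi => by simp [hEdiag i j hi])
      rw [h1, h2]
      split_ifs with h <;> simp
    · rw [mul_apply, diagonal_apply_ne _ (fun h => hjk (by rw [h]))]
      refine Finset.sum_eq_zero fun i _ => ?_
      rcases eq_or_ne ((i:ℕ)) ((j:ℕ)) with h | h
      · rw [transpose_apply, hEdiag i k (h ▸ hjk), mul_zero]
      · rw [transpose_apply, hEdiag i j h, zero_mul]
  have hB2 : B ^ 2 = (U * E * Vᵀ)ᴴ * (U * E * Vᵀ) := by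
    rw [conjTranspose_eq_transpose_of_trivial, sandwich_mul U V hU, hEE, pow_two, hB]
    calc V * diagonal d * Vᵀ * (V * diagonal d * Vᵀ)
        = V * (diagonal d * (Vᵀ * V) * diagonal d) * Vᵀ := by simp only [Matrix.mul_assoc]
      _ = V * diagonal (fun j => d j * d j) * Vᵀ := by
          rw [hV, Matrix.mul_one, diagonal_mul_diagonal]
  have hsq : B = CFC.sqrt ((U * E * Vᵀ)ᴴ * (U * E * Vᵀ)) := by
    rw [← hB2, CFC.sqrt_sq B hBpsd.nonneg]
  rw [nuclearNorm_eq_trace_sqrt, ← hsq, hB, trace_conj V hV, trace_diagonal]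

lemma diag_tmul (D : Matrix (Fin m) (Fin n) ℝ)
    (hDdiag : ∀ (i : Fin m) (j : Fin n), (i:ℕ) ≠ (j:ℕ) → D i j = 0) :
    Dᵀ * D = diagonal (fun j => ∑ i, D i j * D i j) := by
  ext j k
  by_cases hjk : (j:ℕ) = (k:ℕ)
  · have : j = k := Fin.ext hjk
    subst this
    rw [mul_apply, diagonal_apply_eq]
    simp [transpose_apply]
  · rw [mul_apply, diagonal_apply_ne _ (fun h => hjk (by rw [h]))]
    refine Finset.sum_eq_zero fun i _ => ?_
    rcases eq_or_ne ((i:ℕ)) ((j:ℕ)) with h | h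
    · rw [transpose_apply, hDdiag i k (h ▸ hjk), mul_zero]
    · rw [transpose_apply, hDdiag i j h, zero_mul]

lemma dot_self_eq (M : Matrix (Fin m) (Fin n) ℝ) (y : Fin n → ℝ) (z : Fin m → ℝ) :
    y ⬝ᵥ (Mᵀ *ᵥ z) = (M *ᵥ y) ⬝ᵥ z := by
  rw [dotProduct_mulVec, vecMul_transpose]

lemma mulVec_sq_le (U : Matrix (Fin m) (Fin m) ℝ) (V : Matrix (Fin n) (Fin n) ℝ)
    (hU : Uᵀ * U = 1) (hV' : V * Vᵀ = 1)
    (D : Matrix (Fin m) (Fin n) ℝ)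
    (hDdiag : ∀ (i : Fin m) (j : Fin n), (i:ℕ) ≠ (j:ℕ) → D i j = 0)
    (hD0 : ∀ (i : Fin m) (j : Fin n), 0 ≤ D i j)
    (hD1 : ∀ (i : Fin m) (j : Fin n), D i j ≤ 1)
    (x : Fin n → ℝ) :
    ((U * D * Vᵀ) *ᵥ x) ⬝ᵥ ((U * D * Vᵀ) *ᵥ x) ≤ x ⬝ᵥ x := by
  set G := U * D * Vᵀ with hG
  set e : Fin n → ℝ := fun j => ∑ i, D i j * D i j with he
  have he1 : ∀ j, e j ≤ 1 := by
    intro j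
    show (∑ i, D i j * D i j) ≤ 1
    rw [sum_diag_col j _ (fun i hi => by rw [hDdiag i j hi, zero_mul])]
    split_ifs with h
    · nlinarith [hD0 ⟨(j:ℕ),h⟩ j, hD1 ⟨(j:ℕ),h⟩ j]
    · norm_num
  have hGG : Gᵀ * G = V * diagonal e * Vᵀ := by
    rw [hG, sandwich_mul U V hU, diag_tmul D hDdiag]
  have h1 : x ⬝ᵥ ((Gᵀ * G) *ᵥ x) = (G *ᵥ x) ⬝ᵥ (G *ᵥ x) := by
    conv_lhs => rw [← mulVec_mulVec]
    rw [dot_self_eq]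
  rw [← h1, hGG]
  have h2 : x ⬝ᵥ ((V * diagonal e * Vᵀ) *ᵥ x)
      = (Vᵀ *ᵥ x) ⬝ᵥ (diagonal e *ᵥ (Vᵀ *ᵥ x)) := by
    rw [← mulVec_mulVec, ← mulVec_mulVec]
    rw [show (V : Matrix (Fin n) (Fin n) ℝ) = Vᵀᵀ from (transpose_transpose V).symm,
      dot_self_eq, transpose_transpose]
  rw [h2]
  set y := Vᵀ *ᵥ x with hy
  have h3 : y ⬝ᵥ (diagonal e *ᵥ y) ≤ y ⬝ᵥ y := by
    simp only [dotProduct, mulVec_diagonal]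
    refine Finset.sum_le_sum fun j _ => ?_
    nlinarith [he1 j, sq_nonneg (y j), he, Finset.sum_nonneg
      (fun i (_ : i ∈ Finset.univ) => mul_self_nonneg (D i j))]
  have h4 : y ⬝ᵥ y = x ⬝ᵥ x := by
    rw [hy, dotProduct_mulVec, vecMul_transpose, mulVec_mulVec, hV', one_mulVec]
  rw [← h4]
  exact h3

lemma conj_diag_entry (Q M : Matrix (Fin n) (Fin n) ℝ) (j : Fin n) :
    (star Q * M * Q) j j = (fun i => Q i j) ⬝ᵥ (M *ᵥ (fun i => Q i j)) := by
  rw [Matrix.mul_assoc]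
  simp only [mul_apply, dotProduct, mulVec, Matrix.star_apply, star_trivial]

lemma dual_bound (U : Matrix (Fin m) (Fin m) ℝ) (V : Matrix (Fin n) (Fin n) ℝ)
    (hU : Uᵀ * U = 1) (hV' : V * Vᵀ = 1)
    (D : Matrix (Fin m) (Fin n) ℝ)
    (hDdiag : ∀ (i : Fin m) (j : Fin n), (i:ℕ) ≠ (j:ℕ) → D i j = 0)
    (hD0 : ∀ (i : Fin m) (j : Fin n), 0 ≤ D i j)
    (hD1 : ∀ (i : Fin m) (j : Fin n), D i j ≤ 1)
    (L : Matrix (Fin m) (Fin n) ℝ) :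
    ∑ i, ∑ j, (U * D * Vᵀ) i j * L i j ≤ nuclearNorm L := by
  set G := U * D * Vᵀ with hG
  have hP := Matrix.posSemidef_conjTranspose_mul_self L
  set Q : Matrix (Fin n) (Fin n) ℝ := (hP.1.eigenvectorUnitary : Matrix (Fin n) (Fin n) ℝ)
    with hQdef
  have hQ1 : star Q * Q = 1 := Matrix.mem_unitaryGroup_iff'.mp hP.1.eigenvectorUnitary.2
  have hQ2 : Q * star Q = 1 := Matrix.mem_unitaryGroup_iff.mp hP.1.eigenvectorUnitary.2
  set v : Fin n → (Fin n → ℝ) := fun j => fun i => Q i j with hv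
  have hv1 : ∀ j, v j ⬝ᵥ v j = 1 := by
    intro j
    have h := congrFun (congrFun hQ1 j) j
    simp only [mul_apply, Matrix.star_apply, star_trivial, one_apply_eq] at h
    simpa [dotProduct] using h
  have hspec := hP.1.conjStarAlgAut_star_eigenvectorUnitary
  rw [Unitary.conjStarAlgAut_star_apply] at hspec
  have hlam : ∀ j, v j ⬝ᵥ ((Lᴴ * L) *ᵥ v j) = hP.1.eigenvalues j := by
    intro j
    rw [← conj_diag_entry, hspec, diagonal_apply_eq]
    simp [RCLike.ofReal_real_eq_id]
  have hLv : ∀ j, (L *ᵥ v j) ⬝ᵥ (L *ᵥ v j) = hP.1.eigenvalues j := by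
    intro j
    rw [← hlam j]
    conv_rhs => rw [conjTranspose_eq_transpose_of_trivial, ← mulVec_mulVec, dot_self_eq]
  have htr : nuclearNorm L = ∑ j, Real.sqrt (hP.1.eigenvalues j) := by
    have hs : nuclearNorm L =
        (Q * diagonal (RCLike.ofReal ∘ Real.sqrt ∘ hP.1.eigenvalues) * star Q).trace :=
      rfl
    show nuclearNorm L = _
    rw [hs, trace_mul_cycle, hQ1, Matrix.one_mul, trace_diagonal]
    simp [RCLike.ofReal_real_eq_id]
  have hmain : ∑ i, ∑ j, G i j * L i j = ∑ j, (G *ᵥ v j) ⬝ᵥ (L *ᵥ v j) := by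
    rw [ip_eq_trace]
    have h1 : (Gᵀ * L).trace = (star Q * (Gᵀ * L) * Q).trace := by
      rw [trace_mul_cycle, ← Matrix.mul_assoc, hQ2, Matrix.one_mul]
    rw [h1, trace]
    refine Finset.sum_congr rfl fun j _ => ?_
    rw [diag_apply, conj_diag_entry]
    conv_lhs => rw [← mulVec_mulVec, dot_self_eq]
  rw [hmain, htr]
  refine Finset.sum_le_sum fun j _ => ?_
  have hcs : (G *ᵥ v j) ⬝ᵥ (L *ᵥ v j)
      ≤ Real.sqrt (∑ i, (G *ᵥ v j) i ^ 2) * Real.sqrt (∑ i, (L *ᵥ v j) i ^ 2) :=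
    Real.sum_mul_le_sqrt_mul_sqrt Finset.univ _ _
  have ha : (∑ i, (G *ᵥ v j) i ^ 2) = (G *ᵥ v j) ⬝ᵥ (G *ᵥ v j) := by
    simp [dotProduct, sq]
  have hb : (∑ i, (L *ᵥ v j) i ^ 2) = (L *ᵥ v j) ⬝ᵥ (L *ᵥ v j) := by
    simp [dotProduct, sq]
  rw [ha, hb, hLv] at hcs
  have haa : (G *ᵥ v j) ⬝ᵥ (G *ᵥ v j) ≤ 1 := by
    have h := mulVec_sq_le U V hU hV' D hDdiag hD0 hD1 (v j)
    rw [hv1 j] at h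
    exact h
  have h2 : Real.sqrt ((G *ᵥ v j) ⬝ᵥ (G *ᵥ v j)) ≤ 1 := by
    rw [show (1:ℝ) = Real.sqrt 1 by rw [Real.sqrt_one]]
    exact Real.sqrt_le_sqrt haa
  calc (G *ᵥ v j) ⬝ᵥ (L *ᵥ v j)
      ≤ Real.sqrt ((G *ᵥ v j) ⬝ᵥ (G *ᵥ v j)) * Real.sqrt (hP.1.eigenvalues j) := hcs
    _ ≤ 1 * Real.sqrt (hP.1.eigenvalues j) :=
        mul_le_mul_of_nonneg_right h2 (Real.sqrt_nonneg _)
    _ = Real.sqrt (hP.1.eigenvalues j) := one_mul _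

end NNPaux

/-- Nuclear-Norm Penalization: the soft-thresholded SVD `L* = U (Σ − (1/(2γ))·I)₊ Vᵀ`
is a global minimizer of `L ↦ ‖L‖_* + γ‖Y − L‖_F²`. -/
theorem nnp_soft_threshold_minimizer {m n : ℕ}
    (Y : Matrix (Fin m) (Fin n) ℝ)
    (U : Matrix (Fin m) (Fin m) ℝ) (S : Matrix (Fin m) (Fin n) ℝ)
    (V : Matrix (Fin n) (Fin n) ℝ) (γ : ℝ) (hγ : 0 < γ)
    (hU : Uᵀ * U = 1) (hU' : U * Uᵀ = 1)
    (hV : Vᵀ * V = 1) (hV' : V * Vᵀ = 1)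
    (hSdiag : ∀ (i : Fin m) (j : Fin n), (i : ℕ) ≠ (j : ℕ) → S i j = 0)
    (hSnonneg : ∀ (i : Fin m) (j : Fin n), 0 ≤ S i j)
    (hY : Y = U * S * Vᵀ)
    (Lstar : Matrix (Fin m) (Fin n) ℝ)
    (hLstar : Lstar = U * (Matrix.of fun i j =>
        max (S i j - if (i : ℕ) = (j : ℕ) then 1 / (2 * γ) else 0) 0) * Vᵀ) :
    ∀ L : Matrix (Fin m) (Fin n) ℝ,
      nuclearNorm Lstar + γ * (frobNorm (Y - Lstar)) ^ 2 ≤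
        nuclearNorm L + γ * (frobNorm (Y - L)) ^ 2 := by
  intro L
  open NNPaux in
  set T : Matrix (Fin m) (Fin n) ℝ := Matrix.of fun i j =>
      max (S i j - if (i : ℕ) = (j : ℕ) then 1 / (2 * γ) else 0) 0 with hT
  have hc0 : (0:ℝ) ≤ 1 / (2 * γ) := by positivity
  have hTdiag : ∀ (i : Fin m) (j : Fin n), (i:ℕ) ≠ (j:ℕ) → T i j = 0 := by
    intro i j hij
    show max (S i j - if (i : ℕ) = (j : ℕ) then 1 / (2 * γ) else 0) 0 = 0
    rw [if_neg hij, hSdiag i j hij]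
    simp
  have hT0 : ∀ (i : Fin m) (j : Fin n), 0 ≤ T i j := fun i j => le_max_right _ _
  set D : Matrix (Fin m) (Fin n) ℝ := Matrix.of fun i j => 2 * γ * (S i j - T i j) with hD
  have hDapp : ∀ (i : Fin m) (j : Fin n), D i j = 2 * γ * (S i j - T i j) := fun i j => rfl
  have hTapp : ∀ (i : Fin m) (j : Fin n),
      T i j = max (S i j - if (i : ℕ) = (j : ℕ) then 1 / (2 * γ) else 0) 0 := fun i j => rfl
  have hDdiag : ∀ (i : Fin m) (j : Fin n), (i:ℕ) ≠ (j:ℕ) → D i j = 0 := by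
    intro i j hij
    rw [hDapp, hTdiag i j hij, hSdiag i j hij]
    ring
  have hD0 : ∀ (i : Fin m) (j : Fin n), 0 ≤ D i j := by
    intro i j
    rw [hDapp, hTapp]
    have h1 : max (S i j - if (i : ℕ) = (j : ℕ) then 1 / (2 * γ) else 0) 0 ≤ S i j := by
      apply max_le _ (hSnonneg i j)
      split_ifs
      · linarith
      · linarith
    nlinarith
  have hD1 : ∀ (i : Fin m) (j : Fin n), D i j ≤ 1 := by
    intro i j
    rw [hDapp, hTapp]
    by_cases hij : (i:ℕ) = (j:ℕ)
    · rw [if_pos hij]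
      rcases le_total (S i j) (1 / (2 * γ)) with h | h
      · rw [max_eq_right (by linarith)]
        have h2 : 2 * γ * (1 / (2 * γ)) = 1 := by field_simp
        nlinarith
      · rw [max_eq_left (by linarith)]
        have h2 : 2 * γ * (1 / (2 * γ)) = 1 := by field_simp
        nlinarith
    · rw [if_neg hij, hSdiag i j hij]
      simp [hγ.le]
  have hYLs : Y - Lstar = U * (S - T) * Vᵀ := by
    rw [hY, hLstar, ← Matrix.sub_mul, ← Matrix.mul_sub]
  have hGsmul : U * D * Vᵀ = (2 * γ) • (Y - Lstar) := by
    rw [hYLs]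
    have : D = (2 * γ) • (S - T) := by
      ext i j
      rw [hDapp]
      simp [Matrix.smul_apply, Matrix.sub_apply]
    rw [this, Matrix.mul_smul, Matrix.smul_mul]
  have hGip : ∀ X : Matrix (Fin m) (Fin n) ℝ,
      ∑ i, ∑ j, (U * D * Vᵀ) i j * X i j
        = 2 * γ * ∑ i, ∑ j, (Y - Lstar) i j * X i j := by
    intro X
    rw [hGsmul]
    simp only [Matrix.smul_apply, smul_eq_mul, Finset.mul_sum, mul_assoc]
  -- nuclear norm of Lstar and the subgradient identity
  have hnnLs : nuclearNorm Lstar = ∑ j : Fin n, ∑ i : Fin m, T i j := by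
    rw [hLstar]
    exact nuclear_sandwich U V hU hV T hTdiag hT0
  have hipstar : ∑ i, ∑ j, (U * D * Vᵀ) i j * Lstar i j = nuclearNorm Lstar := by
    rw [hLstar, ip_sandwich U V hU hV, ← hLstar, hnnLs, Finset.sum_comm]
    refine Finset.sum_congr rfl fun k _ => Finset.sum_congr rfl fun l _ => ?_
    show D l k * T l k = T l k
    by_cases hij : (l:ℕ) = (k:ℕ)
    · rw [hDapp, hTapp, if_pos hij]
      rcases le_total (S l k) (1 / (2 * γ)) with h | h
      · rw [max_eq_right (by linarith)]
        ring
      · rw [max_eq_left (by linarith)]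
        have h2 : 2 * γ * (1 / (2 * γ)) = 1 := by field_simp
        nlinarith
    · rw [hTdiag l k hij, mul_zero]
  have hdual := dual_bound U V hU hV' D hDdiag hD0 hD1 L
  -- quadratic expansion
  have hfrob : ∀ A : Matrix (Fin m) (Fin n) ℝ,
      (frobNorm A) ^ 2 = ∑ i, ∑ j, (A i j) ^ 2 := by
    intro A
    rw [frobNorm]
    exact Real.sq_sqrt (Finset.sum_nonneg fun i _ => Finset.sum_nonneg fun j _ => sq_nonneg _)
  rw [hfrob, hfrob]
  set q1 := ∑ i, ∑ j, ((Y - Lstar) i j) ^ 2 with hq1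
  set q2 := ∑ i, ∑ j, ((Y - L) i j) ^ 2 with hq2
  set q3 := ∑ i, ∑ j, ((L - Lstar) i j) ^ 2 with hq3
  set a := ∑ i, ∑ j, (Y - Lstar) i j * (L - Lstar) i j with ha
  have hexp : q2 = q1 - 2 * a + q3 := by
    rw [hq2, hq1, hq3, ha]
    have h1 : ∀ (i : Fin m) (j : Fin n), ((Y - L) i j) ^ 2
        = ((Y - Lstar) i j) ^ 2 - 2 * ((Y - Lstar) i j * (L - Lstar) i j)
          + ((L - Lstar) i j) ^ 2 := by
      intro i j
      simp only [Matrix.sub_apply]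
      ring
    calc ∑ i, ∑ j, ((Y - L) i j) ^ 2
        = ∑ i, ∑ j, (((Y - Lstar) i j) ^ 2 - 2 * ((Y - Lstar) i j * (L - Lstar) i j)
            + ((L - Lstar) i j) ^ 2) :=
          Finset.sum_congr rfl fun i _ => Finset.sum_congr rfl fun j _ => h1 i j
      _ = _ := by
          simp only [Finset.sum_add_distrib, Finset.sum_sub_distrib, ← Finset.mul_sum]
  have hq3nn : 0 ≤ q3 :=
    Finset.sum_nonneg fun i _ => Finset.sum_nonneg fun j _ => sq_nonneg _
  have hsplit : ∑ i, ∑ j, (U * D * Vᵀ) i j * (L - Lstar) i j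
      = (∑ i, ∑ j, (U * D * Vᵀ) i j * L i j)
        - ∑ i, ∑ j, (U * D * Vᵀ) i j * Lstar i j := by
    simp only [Matrix.sub_apply, mul_sub, Finset.sum_sub_distrib]
  have e1 : 2 * γ * a = (∑ i, ∑ j, (U * D * Vᵀ) i j * L i j) - nuclearNorm Lstar := by
    rw [← hipstar, ← hsplit, hGip (L - Lstar), ha]
  have e2 : γ * q2 = γ * q1 - 2 * γ * a + γ * q3 := by
    rw [hexp]; ring
  have hq3nn' : 0 ≤ γ * q3 := mul_nonneg hγ.le hq3nn
  linarith [hdual, e1, e2, hq3nn']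
end

section
/- Let n, k, k₀ be natural numbers with k₀ ≤ k and 2k − k₀ ≤ n, and let {e₁, …, e_n} be the standard basis of ℝⁿ. Let W = span{e₁, …, e_k} and W′ = span({e₁, …, e_{k₀}} ∪ {e_{k+1}, …, e_{2k−k₀}}), with orthogonal projections P_W and P_{W′} onto W and W′. Then the projection metric d_proj(W, W′) = ‖P_W − P_{W′}‖ (operator norm) equals 1 whenever k₀ < k, and equals 0 when k₀ = k. In particular, d_proj(W, W′) does not depend on k₀ as long as k₀ < k. -/
open Submodule
open scoped RealInnerProductSpace

section aux

variable {E : Type*} [NormedAddCommGroup E] [InnerProductSpace ℝ E]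

private lemma norm_sub_proj_le (K : Submodule ℝ E) [HasOrthogonalProjection K] (v : E) :
    ‖v - (orthogonalProjection K v : E)‖ ≤ ‖v‖ := by
  have horth : (inner ℝ ((orthogonalProjection K v : E)) (v - (orthogonalProjection K v : E)) : ℝ)
      = 0 := by
    have := sub_starProjection_mem_orthogonal (K := K) v
    exact ((Submodule.mem_orthogonal K _).mp this _ (orthogonalProjection K v).2)
  have hpy : ‖v‖ ^ 2 = ‖(orthogonalProjection K v : E)‖ ^ 2
      + ‖v - (orthogonalProjection K v : E)‖ ^ 2 := by
    have h := norm_add_sq_real ((orthogonalProjection K v : E))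
      (v - (orthogonalProjection K v : E))
    rw [horth] at h
    simpa using h
  nlinarith [norm_nonneg (v - (orthogonalProjection K v : E)), norm_nonneg v,
    sq_nonneg ‖(orthogonalProjection K v : E)‖]

private lemma norm_proj_le (K : Submodule ℝ E) [HasOrthogonalProjection K] (v : E) :
    ‖(orthogonalProjection K v : E)‖ ≤ ‖v‖ := by
  calc ‖(orthogonalProjection K v : E)‖ = ‖orthogonalProjection K v‖ := rfl
    _ ≤ ‖orthogonalProjection K‖ * ‖v‖ := (orthogonalProjection K).le_opNorm v
    _ ≤ 1 * ‖v‖ := mul_le_mul_of_nonneg_right (orthogonalProjection_norm_le K) (norm_nonneg v)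
    _ = ‖v‖ := one_mul _

private lemma norm_proj_sub_proj_le (K L : Submodule ℝ E)
    [HasOrthogonalProjection K] [HasOrthogonalProjection L] (x : E) :
    ‖(K.subtypeL.comp (orthogonalProjection K) - L.subtypeL.comp (orthogonalProjection L)) x‖
      ≤ ‖x‖ := by
  set P : E →L[ℝ] E := K.subtypeL.comp (orthogonalProjection K) with hP
  set Q : E →L[ℝ] E := L.subtypeL.comp (orthogonalProjection L) with hQ
  have hPapp : ∀ y, P y = (orthogonalProjection K y : E) := fun y => rfl
  have hQapp : ∀ y, Q y = (orthogonalProjection L y : E) := fun y => rfl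
  set a : E := P (x - Q x) with ha'
  set b : E := Q x - P (Q x) with hb'
  have hsplit : P x - Q x = a - b := by
    rw [ha', hb', map_sub]
    abel
  have haK : a ∈ K := by
    rw [ha', hPapp]
    exact (orthogonalProjection K (x - Q x)).2
  have hbK : b ∈ Kᗮ := by
    rw [hb', hPapp]
    exact sub_starProjection_mem_orthogonal (K := K) (Q x)
  have hab : (inner ℝ a b : ℝ) = 0 := (Submodule.mem_orthogonal K b).mp hbK a haK
  have hnorm : ‖a - b‖ ^ 2 = ‖a‖ ^ 2 + ‖b‖ ^ 2 := by
    have h := norm_sub_sq_real a b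
    rw [hab] at h
    linarith
  have ha : ‖a‖ ≤ ‖x - Q x‖ := by
    rw [ha', hPapp]
    exact norm_proj_le K _
  have hb : ‖b‖ ≤ ‖Q x‖ := by
    rw [hb', hPapp, hQapp]
    exact norm_sub_proj_le K _
  have hxq : (inner ℝ (Q x) (x - Q x) : ℝ) = 0 := by
    rw [hQapp]
    exact (Submodule.mem_orthogonal L _).mp
      (sub_starProjection_mem_orthogonal (K := L) x) _ (orthogonalProjection L x).2
  have hxpy : ‖x‖ ^ 2 = ‖Q x‖ ^ 2 + ‖x - Q x‖ ^ 2 := by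
    have h := norm_add_sq_real (Q x) (x - Q x)
    rw [hxq] at h
    simpa using h
  have key : ‖P x - Q x‖ ^ 2 ≤ ‖x‖ ^ 2 := by
    rw [hsplit, hnorm, hxpy]
    nlinarith [norm_nonneg a, norm_nonneg b, norm_nonneg (x - Q x), norm_nonneg (Q x)]
  have hfin : ‖P x - Q x‖ ≤ ‖x‖ := by
    nlinarith [norm_nonneg (P x - Q x), norm_nonneg x]
  simpa using hfin

end aux

/-- For `W = span{e₁, …, e_k}` and `W′ = span({e₁, …, e_{k₀}} ∪ {e_{k+1}, …, e_{2k−k₀}})`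
in `ℝⁿ`, the projection metric `d_proj(W, W′) = ‖P_W − P_{W′}‖` equals `1` whenever
`k₀ < k`, and equals `0` when `k₀ = k`; in particular it does not depend on `k₀` as long
as `k₀ < k`. -/
theorem projection_metric_coordinate_subspaces {n k k₀ : ℕ}
    (h₁ : k₀ ≤ k) (h₂ : 2 * k - k₀ ≤ n) :
    let W : Submodule ℝ (EuclideanSpace ℝ (Fin n)) :=
      Submodule.span ℝ
        {x | ∃ j : Fin n, (j : ℕ) < k ∧ x = EuclideanSpace.single j (1 : ℝ)}
    let W' : Submodule ℝ (EuclideanSpace ℝ (Fin n)) :=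
      Submodule.span ℝ
        {x | ∃ j : Fin n, ((j : ℕ) < k₀ ∨ (k ≤ (j : ℕ) ∧ (j : ℕ) < 2 * k - k₀)) ∧
          x = EuclideanSpace.single j (1 : ℝ)}
    let PW : EuclideanSpace ℝ (Fin n) →L[ℝ] EuclideanSpace ℝ (Fin n) :=
      W.subtypeL.comp (orthogonalProjection W)
    let PW' : EuclideanSpace ℝ (Fin n) →L[ℝ] EuclideanSpace ℝ (Fin n) :=
      W'.subtypeL.comp (orthogonalProjection W')
    (k₀ < k → ‖PW - PW'‖ = 1) ∧ (k₀ = k → ‖PW - PW'‖ = 0) := by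
  intro W W' PW PW'
  constructor
  · intro hlt
    have hk₀n : k₀ < n := by omega
    set j₀ : Fin n := ⟨k₀, hk₀n⟩
    set e : EuclideanSpace ℝ (Fin n) := EuclideanSpace.single j₀ (1 : ℝ)
    have heW : e ∈ W := Submodule.subset_span ⟨j₀, by simpa using hlt, rfl⟩
    have hPWe : PW e = e := by
      show ((orthogonalProjection W e : _) : EuclideanSpace ℝ (Fin n)) = e
      exact starProjection_eq_self_iff.mpr heW
    have heW' : e ∈ W'ᗮ := by
      rw [Submodule.mem_orthogonal]
      intro u hu
      have hle : W' ≤ (ℝ ∙ e)ᗮ := by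
        rw [Submodule.span_le]
        rintro x ⟨j, hj, rfl⟩
        rw [SetLike.mem_coe, Submodule.mem_orthogonal_singleton_iff_inner_right]
        have hne : j ≠ j₀ := by
          intro h
          have : (j : ℕ) = k₀ := by rw [h]
          omega
        rw [show e = EuclideanSpace.single j₀ (1:ℝ) from rfl,
          EuclideanSpace.inner_single_left, EuclideanSpace.single_apply]
        simp [Ne.symm hne]
      have := hle hu
      rw [Submodule.mem_orthogonal_singleton_iff_inner_right] at this
      rw [real_inner_comm]
      exact this
    have hPW'e : PW' e = 0 := by
      show ((orthogonalProjection W' e : _) : EuclideanSpace ℝ (Fin n)) = 0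
      rw [Submodule.orthogonalProjectionOnto_apply_of_mem_orthogonal heW']
      rfl
    have hne : ‖e‖ = 1 := by
      simp [e, EuclideanSpace.norm_single]
    have hlow : (1 : ℝ) ≤ ‖PW - PW'‖ := by
      have h := (PW - PW').le_opNorm e
      rw [ContinuousLinearMap.sub_apply, hPWe, hPW'e, sub_zero, hne, mul_one] at h
      linarith
    have hup : ‖PW - PW'‖ ≤ 1 := by
      apply ContinuousLinearMap.opNorm_le_bound _ zero_le_one
      intro x
      rw [one_mul]
      exact norm_proj_sub_proj_le W W' x
    linarith
  · intro heq
    have hset : {x : EuclideanSpace ℝ (Fin n) |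
        ∃ j : Fin n, ((j : ℕ) < k₀ ∨ (k ≤ (j : ℕ) ∧ (j : ℕ) < 2 * k - k₀)) ∧
          x = EuclideanSpace.single j (1 : ℝ)}
        = {x | ∃ j : Fin n, (j : ℕ) < k ∧ x = EuclideanSpace.single j (1 : ℝ)} := by
      ext x
      constructor
      · rintro ⟨j, hj, rfl⟩; exact ⟨j, by omega, rfl⟩
      · rintro ⟨j, hj, rfl⟩; exact ⟨j, by omega, rfl⟩
    have hWW : W' = W := by
      show Submodule.span ℝ _ = Submodule.span ℝ _
      rw [hset]
    have hPP : PW = PW' := by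
      apply ContinuousLinearMap.ext
      intro x
      show ((orthogonalProjection W x : _) : EuclideanSpace ℝ (Fin n))
        = ((orthogonalProjection W' x : _) : EuclideanSpace ℝ (Fin n))
      symm
      refine eq_starProjection_of_mem_orthogonal (K := W') ?_ ?_
      · rw [hWW]; exact (orthogonalProjection W x).2
      · rw [hWW]; exact sub_starProjection_mem_orthogonal x
    rw [hPP, sub_self, norm_zero]
end
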